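/- For all n ≥ 3, with ℓ = n(n−1)/2: for every j ∈ {1,…,n−2} and every position k ∈ {1,…,ℓ−1}, the number of reduced words i₁⋯i_ℓ for the longest element w₀ ∈ S_n with i_k = j and i_{k+1} = j+1 equals the number of reduced words for w₀ with i₁ = j and i₂ = j+1 (i.e., this count is independent of the position k). -/

import Mathlib

open scoped Classical
set_option maxRecDepth 4000


/-- The adjacent transposition `sᵢ ∈ S_n` swapping `i` and `i+1` (one-based),
for `i ∈ {1, …, n-1}`; junk value `1` otherwise. -/
def simpleRefl (n i : ℕ) : Equiv.Perm (Fin n) :=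
  if h : 1 ≤ i ∧ i < n then Equiv.swap ⟨i - 1, by omega⟩ ⟨i, h.2⟩ else 1

/-- The product `s_{i₁} ⋯ s_{i_m}` of the word `i₁ ⋯ i_m`. -/
def wordProd (n : ℕ) (l : List ℕ) : Equiv.Perm (Fin n) :=
  (l.map (simpleRefl n)).prod

/-- `l` is a word for `w`: letters in `{1, …, n-1}` and product `w`. -/
def IsWordFor (n : ℕ) (w : Equiv.Perm (Fin n)) (l : List ℕ) : Prop :=
  (∀ i ∈ l, 1 ≤ i ∧ i ≤ n - 1) ∧ wordProd n l = w

/-- `l` is a reduced word for `w`: a word for `w` of minimal length. -/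
def IsReducedWordFor (n : ℕ) (w : Equiv.Perm (Fin n)) (l : List ℕ) : Prop :=
  IsWordFor n w l ∧ ∀ l', IsWordFor n w l' → l.length ≤ l'.length

/-- The longest element `w₀ ∈ S_n`, `w₀(i) = n + 1 - i` in one-line notation. -/
def w₀ (n : ℕ) : Equiv.Perm (Fin n) := Fin.revPerm

/-- The number of positions of the word `l` supporting a commutation,
i.e. positions `k` with `|i_k - i_{k+1}| > 1`. -/
def commCount (l : List ℕ) : ℕ :=
  ((Finset.range (l.length - 1)).filter
    (fun k => 1 < |(l.getD k 0 : ℤ) - (l.getD (k+1) 0 : ℤ)|)).card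

/-- The number of consecutive noncommuting pairs in the word `l`,
i.e. positions `k` with `|i_k - i_{k+1}| = 1`. -/
def noncommCount (l : List ℕ) : ℕ :=
  ((Finset.range (l.length - 1)).filter
    (fun k => |(l.getD k 0 : ℤ) - (l.getD (k+1) 0 : ℤ)| = 1)).card

/-- The number of positions of `l` supporting a long braid move, i.e. positions `k`
with `(i_k, i_{k+1}, i_{k+2})` of the form `(i, i+1, i)` or `(i+1, i, i+1)`. -/
noncomputable def braidCount (l : List ℕ) : ℕ :=
  ((Finset.range (l.length - 2)).filter
    (fun k => ∃ i : ℕ,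
      (l.getD k 0, l.getD (k+1) 0, l.getD (k+2) 0) = (i, i+1, i) ∨
      (l.getD k 0, l.getD (k+1) 0, l.getD (k+2) 0) = (i+1, i, i+1))).card


/-- For `j ∈ {1, …, n-2}` and any position `k ∈ {1, …, ℓ-1}`, the number of reduced
words for `w₀ ∈ S_n` with `i_k = j` and `i_(k+1) = j+1` equals the number with
`i₁ = j` and `i₂ = j+1`; the count is independent of the position `k`. -/
lemma swap_val {n : ℕ} (u v z : Fin n) :
    ((Equiv.swap u v) z).1 = if z = u then v.1 else if z = v then u.1 else z.1 := by
  rw [Equiv.swap_apply_def]; split_ifs <;> rfl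

lemma simpleRefl_val {n a : ℕ} (h1 : 1 ≤ a) (h2 : a < n) (z : Fin n) :
    ((simpleRefl n a) z).1 = if z.1 = a - 1 then a else if z.1 = a then a - 1 else z.1 := by
  unfold simpleRefl
  rw [dif_pos ⟨h1, h2⟩, swap_val]
  simp [Fin.ext_iff]

lemma simpleRefl_sq (n a : ℕ) : simpleRefl n a * simpleRefl n a = 1 := by
  unfold simpleRefl; split_ifs with h
  · exact Equiv.swap_mul_self _ _
  · simp

lemma simpleRefl_conj {n a : ℕ} (h1 : 1 ≤ a) (h2 : a < n) :
    simpleRefl n a * w₀ n = w₀ n * simpleRefl n (n - a) := by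
  have h1' : 1 ≤ n - a := by omega
  have h2' : n - a < n := by omega
  ext x
  have hx := x.2
  simp only [Equiv.Perm.mul_apply, w₀, Fin.revPerm_apply]
  rw [simpleRefl_val h1 h2, Fin.val_rev, Fin.val_rev, simpleRefl_val h1' h2']
  split_ifs <;> omega

lemma wordProd_cons (n a : ℕ) (t : List ℕ) :
    wordProd n (a :: t) = simpleRefl n a * wordProd n t := by simp [wordProd]

lemma wordProd_concat (n b : ℕ) (t : List ℕ) :
    wordProd n (t ++ [b]) = wordProd n t * simpleRefl n b := by simp [wordProd]

lemma rot_word {n a : ℕ} {t : List ℕ} (h : IsWordFor n (w₀ n) (a :: t)) :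
    IsWordFor n (w₀ n) (t ++ [n - a]) := by
  obtain ⟨hmem, hprod⟩ := h
  have ha := hmem a List.mem_cons_self
  constructor
  · intro i hi
    rcases List.mem_append.1 hi with h | h
    · exact hmem i (List.mem_cons_of_mem _ h)
    · simp only [List.mem_singleton] at h; omega
  · rw [wordProd_cons] at hprod
    have key : simpleRefl n a * w₀ n = w₀ n * simpleRefl n (n - a) :=
      simpleRefl_conj ha.1 (by omega)
    have ht : wordProd n t = simpleRefl n a * w₀ n := by
      rw [← hprod, ← mul_assoc, simpleRefl_sq, one_mul]
    rw [wordProd_concat, ht, key, mul_assoc, simpleRefl_sq, mul_one]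

lemma rot_word_inv {n b : ℕ} {t : List ℕ} (h : IsWordFor n (w₀ n) (t ++ [b])) :
    IsWordFor n (w₀ n) ((n - b) :: t) := by
  obtain ⟨hmem, hprod⟩ := h
  have hb := hmem b (by simp)
  constructor
  · intro i hi
    rcases List.mem_cons.1 hi with h | h
    · omega
    · exact hmem i (List.mem_append.2 (Or.inl h))
  · rw [wordProd_concat] at hprod
    have key : simpleRefl n (n - b) * w₀ n = w₀ n * simpleRefl n b := by
      have := simpleRefl_conj (a := n - b) (n := n) (by omega) (by omega)
      rwa [show n - (n - b) = b by omega] at this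
    have ht : wordProd n t = w₀ n * simpleRefl n b := by
      rw [← hprod, mul_assoc, simpleRefl_sq, mul_one]
    rw [wordProd_cons, ht, ← key, ← mul_assoc, simpleRefl_sq, one_mul]

noncomputable def invNum (n : ℕ) (w : Equiv.Perm (Fin n)) : ℕ :=
  (Finset.univ.filter (fun p : Fin n × Fin n => p.1 < p.2 ∧ w p.2 < w p.1)).card

lemma invNum_one (n : ℕ) : invNum n 1 = 0 := by
  rw [invNum, Finset.card_eq_zero, Finset.filter_eq_empty_iff]
  rintro p - ⟨h1, h2⟩
  simp only [Equiv.Perm.one_apply] at h2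
  exact absurd h2 (not_lt.2 h1.le)

lemma invNum_w₀ (n : ℕ) : invNum n (w₀ n) = n * (n - 1) / 2 := by
  rw [invNum]
  have hcong : (Finset.univ.filter (fun p : Fin n × Fin n => p.1 < p.2 ∧ (w₀ n) p.2 < (w₀ n) p.1))
      = Finset.univ.filter (fun p : Fin n × Fin n => p.1 < p.2) := by
    apply Finset.filter_congr
    intro p _
    constructor
    · exact fun h => h.1
    · refine fun h => ⟨h, ?_⟩
      show Fin.revPerm p.2 < Fin.revPerm p.1
      rw [Fin.revPerm_apply, Fin.revPerm_apply]
      exact Fin.rev_lt_rev.2 h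
  rw [hcong]
  have : (Finset.univ.filter (fun p : Fin n × Fin n => p.1 < p.2)).card
      = ∑ j : Fin n, (j.1 : ℕ) := by
    rw [Finset.card_filter, ← Finset.univ_product_univ, Finset.sum_product_right]
    refine Finset.sum_congr rfl fun j _ => ?_
    have : (∑ i : Fin n, if i < j then (1:ℕ) else 0)
        = (Finset.univ.filter (fun i : Fin n => i < j)).card :=
      (Finset.card_filter _ _).symm
    rw [this, show (Finset.univ.filter (fun i : Fin n => i < j)) = Finset.Iio j by
      ext i; simp, Fin.card_Iio]
  rw [this, Fin.sum_univ_eq_sum_range (fun i => i), Finset.sum_range_id]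

lemma invNum_mul_le (n a : ℕ) (w : Equiv.Perm (Fin n)) :
    invNum n (simpleRefl n a * w) ≤ invNum n w + 1 := by
  by_cases ha : 1 ≤ a ∧ a < n
  · set u : Fin n := ⟨a - 1, by omega⟩ with hu
    set v : Fin n := ⟨a, ha.2⟩ with hv
    set p₀ : Fin n × Fin n :=
      if w⁻¹ u < w⁻¹ v then (w⁻¹ u, w⁻¹ v) else (w⁻¹ v, w⁻¹ u) with hp₀
    have hsub : (Finset.univ.filter
          (fun p : Fin n × Fin n => p.1 < p.2 ∧ (simpleRefl n a * w) p.2 < (simpleRefl n a * w) p.1))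
        ⊆ insert p₀ (Finset.univ.filter
          (fun p : Fin n × Fin n => p.1 < p.2 ∧ w p.2 < w p.1)) := by
      rw [Finset.subset_iff]
      intro p hp
      replace hp := (Finset.mem_filter.1 hp).2
      simp only [Equiv.Perm.mul_apply] at hp
      obtain ⟨hlt, hinv⟩ := hp
      by_cases hcase : (w p.1 = u ∧ w p.2 = v) ∨ (w p.1 = v ∧ w p.2 = u)
      · apply Finset.mem_insert.2
        left
        rcases hcase with ⟨h1, h2⟩ | ⟨h1, h2⟩
        · have e1 : p.1 = w⁻¹ u := by rw [← h1]; simp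
          have e2 : p.2 = w⁻¹ v := by rw [← h2]; simp
          have : w⁻¹ u < w⁻¹ v := by rw [← e1, ← e2]; exact hlt
          rw [hp₀, if_pos this, ← e1, ← e2]
        · have e1 : p.1 = w⁻¹ v := by rw [← h1]; simp
          have e2 : p.2 = w⁻¹ u := by rw [← h2]; simp
          have hne : w⁻¹ u ≠ w⁻¹ v := by
            simp only [ne_eq, EmbeddingLike.apply_eq_iff_eq]
            intro hh
            rw [Fin.ext_iff] at hh
            simp only [hu, hv] at hh
            omega
          have : ¬ (w⁻¹ u < w⁻¹ v) := by
            intro hh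
            have : w⁻¹ v < w⁻¹ u := by rw [← e1, ← e2]; exact hlt
            exact absurd (hh.trans this) (lt_irrefl _)
          rw [hp₀, if_neg this, ← e1, ← e2]
      · apply Finset.mem_insert.2
        right
        simp only [Finset.mem_filter, Finset.mem_univ, true_and]
        refine ⟨hlt, ?_⟩
        push_neg at hcase
        have hvalb := (w p.1).2
        have hvalc := (w p.2).2
        have hne : w p.1 ≠ w p.2 := fun hh => absurd (w.injective hh) (ne_of_lt hlt)
        have hs1 := simpleRefl_val ha.1 ha.2 (w p.1)
        have hs2 := simpleRefl_val ha.1 ha.2 (w p.2)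
        rw [Fin.lt_def] at hinv ⊢
        rw [hs1, hs2] at hinv
        rw [Fin.ne_iff_vne] at hne
        have hc1 : ¬((w p.1).1 = a - 1 ∧ (w p.2).1 = a) := by
          intro hh
          exact hcase.1 (Fin.ext hh.1) (Fin.ext hh.2)
        have hc2 : ¬((w p.1).1 = a ∧ (w p.2).1 = a - 1) := by
          intro hh
          exact hcase.2 (Fin.ext hh.1) (Fin.ext hh.2)
        split_ifs at hinv <;> omega
    calc invNum n (simpleRefl n a * w) ≤ (insert p₀ (Finset.univ.filter
          (fun p : Fin n × Fin n => p.1 < p.2 ∧ w p.2 < w p.1))).card :=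
        Finset.card_le_card hsub
      _ ≤ invNum n w + 1 := Finset.card_insert_le _ _
  · rw [show simpleRefl n a = 1 from by unfold simpleRefl; rw [dif_neg ha], one_mul]
    omega

lemma invNum_wordProd_le (n : ℕ) (l : List ℕ) : invNum n (wordProd n l) ≤ l.length := by
  induction l with
  | nil =>
    have : wordProd n [] = 1 := by simp [wordProd]
    rw [this, invNum_one]
    exact Nat.zero_le _
  | cons a t ih =>
    rw [wordProd_cons]
    calc invNum n (simpleRefl n a * wordProd n t) ≤ invNum n (wordProd n t) + 1 :=
        invNum_mul_le n a _
      _ ≤ t.length + 1 := by omega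
      _ = (a :: t).length := by simp

lemma word_length_ge {n : ℕ} {l : List ℕ} (h : IsWordFor n (w₀ n) l) :
    n * (n - 1) / 2 ≤ l.length := by
  have := invNum_wordProd_le n l
  rw [h.2, invNum_w₀] at this
  exact this

lemma getD_ne_zero_lt {l : List ℕ} {m v : ℕ} (h : l.getD m 0 = v) (hv : 1 ≤ v) :
    m < l.length := by
  by_contra hc
  rw [List.getD_eq_default _ _ (by omega)] at h
  omega

lemma rot_reduced {n a : ℕ} {t : List ℕ} (h : IsReducedWordFor n (w₀ n) (a :: t)) :
    IsReducedWordFor n (w₀ n) (t ++ [n - a]) := by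
  refine ⟨rot_word h.1, fun l' hl' => ?_⟩
  have := h.2 l' hl'
  simp only [List.length_append, List.length_cons, List.length_nil] at *
  omega

lemma rot_reduced_inv {n b : ℕ} {t : List ℕ} (h : IsReducedWordFor n (w₀ n) (t ++ [b])) :
    IsReducedWordFor n (w₀ n) ((n - b) :: t) := by
  refine ⟨rot_word_inv h.1, fun l' hl' => ?_⟩
  have := h.2 l' hl'
  simp only [List.length_append, List.length_cons, List.length_nil] at *
  omega

lemma card_step (n j k : ℕ) (hj : 1 ≤ j) (hk : 1 ≤ k) (hk2 : k + 2 ≤ n * (n - 1) / 2) :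
    Nat.card {l : List ℕ // IsReducedWordFor n (w₀ n) l ∧
        l.getD k 0 = j ∧ l.getD (k + 1) 0 = j + 1}
      = Nat.card {l : List ℕ // IsReducedWordFor n (w₀ n) l ∧
        l.getD (k - 1) 0 = j ∧ l.getD k 0 = j + 1} := by
  have key : ∀ l : List ℕ, (IsReducedWordFor n (w₀ n) l ∧
        l.getD k 0 = j ∧ l.getD (k + 1) 0 = j + 1) →
      (IsReducedWordFor n (w₀ n) (l.tail ++ [n - l.headI]) ∧
        (l.tail ++ [n - l.headI]).getD (k - 1) 0 = j ∧
        (l.tail ++ [n - l.headI]).getD k 0 = j + 1) := by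
    rintro l ⟨hred, h1, h2⟩
    have hlen : k + 1 < l.length := getD_ne_zero_lt h2 (by omega)
    match l, hlen, hred, h1, h2 with
    | a :: t, hlen, hred, h1, h2 =>
      simp only [List.tail_cons, List.headI_cons]
      have hlt : k < t.length + 1 := by simpa using Nat.lt_of_succ_lt hlen
      have hlt2 : k + 1 < t.length + 1 := by simpa using hlen
      refine ⟨rot_reduced hred, ?_, ?_⟩
      · rw [List.getD_append _ _ _ _ (by omega)]
        rw [show k = (k - 1) + 1 by omega, List.getD_cons_succ] at h1
        exact h1
      · rw [List.getD_append _ _ _ _ (by omega)]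
        rw [List.getD_cons_succ] at h2
        exact h2
  set f : {l : List ℕ // IsReducedWordFor n (w₀ n) l ∧
        l.getD k 0 = j ∧ l.getD (k + 1) 0 = j + 1} →
      {l : List ℕ // IsReducedWordFor n (w₀ n) l ∧
        l.getD (k - 1) 0 = j ∧ l.getD k 0 = j + 1} :=
    fun x => ⟨x.1.tail ++ [n - x.1.headI], key x.1 x.2⟩ with hf
  have hinj : Function.Injective f := by
    rintro ⟨l, hred, h1, h2⟩ ⟨l', hred', h1', h2'⟩ hfe
    have hlen : k + 1 < l.length := getD_ne_zero_lt h2 (by omega)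
    have hlen' : k + 1 < l'.length := getD_ne_zero_lt h2' (by omega)
    apply Subtype.ext
    have he : l.tail ++ [n - l.headI] = l'.tail ++ [n - l'.headI] :=
      congrArg Subtype.val hfe
    match l, hlen, hred, he with
    | a :: t, _, hred, he =>
      match l', hlen', hred', he with
      | a' :: t', _, hred', he =>
        simp only [List.tail_cons, List.headI_cons] at he
        obtain ⟨ht, hh⟩ := List.append_inj' he (by simp)
        have ha := hred.1.1 a List.mem_cons_self
        have ha' := hred'.1.1 a' List.mem_cons_self
        simp only [List.cons.injEq] at hh ⊢
        refine ⟨?_, ht⟩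
        have : n - a = n - a' := by simpa using hh
        omega
  have hsurj : Function.Surjective f := by
    rintro ⟨m, hred, h1, h2⟩
    have hk' : k < m.length := getD_ne_zero_lt h2 (by omega)
    have hlow : n * (n - 1) / 2 ≤ m.length := word_length_ge hred.1
    have hlen : k + 2 ≤ m.length := by omega
    have hne : m ≠ [] := by intro h; rw [h] at hk'; simp at hk'
    set b := m.getLast hne with hb
    set t := m.dropLast with ht
    have hm : t ++ [b] = m := List.dropLast_append_getLast hne
    have hbmem : 1 ≤ b ∧ b ≤ n - 1 := hred.1.1 b (by rw [← hm]; simp)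
    have htlen : t.length = m.length - 1 := by
      rw [ht, List.length_dropLast]
    have hredm : IsReducedWordFor n (w₀ n) (t ++ [b]) := by rw [hm]; exact hred
    refine ⟨⟨(n - b) :: t, rot_reduced_inv hredm, ?_, ?_⟩, ?_⟩
    · rw [show k = (k - 1) + 1 by omega, List.getD_cons_succ]
      rw [← hm, List.getD_append _ _ _ _ (by omega)] at h1
      exact h1
    · rw [List.getD_cons_succ]
      rw [← hm, List.getD_append _ _ _ _ (by omega)] at h2
      exact h2
    · apply Subtype.ext
      show ((n - b) :: t).tail ++ [n - ((n - b) :: t).headI] = m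
      simp only [List.tail_cons, List.headI_cons]
      rw [show n - (n - b) = b by omega, hm]
  exact Nat.card_congr (Equiv.ofBijective f ⟨hinj, hsurj⟩)

lemma card_aux (n j : ℕ) (hj : 1 ≤ j) :
    ∀ k, 1 ≤ k → k + 1 ≤ n * (n - 1) / 2 →
    Nat.card {l : List ℕ // IsReducedWordFor n (w₀ n) l ∧
        l.getD (k - 1) 0 = j ∧ l.getD k 0 = j + 1}
      = Nat.card {l : List ℕ // IsReducedWordFor n (w₀ n) l ∧
        l.getD 0 0 = j ∧ l.getD 1 0 = j + 1} := by
  intro k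
  induction k with
  | zero => omega
  | succ k ih =>
    intro h1 h2
    rcases Nat.eq_zero_or_pos k with hk0 | hk1
    · subst hk0; rfl
    · have step := card_step n j k hj hk1 (by omega)
      rw [show k + 1 - 1 = k by omega]
      rw [step]
      exact ih hk1 (by omega)


theorem ascending_pair_position_independent (n : ℕ) (hn : 3 ≤ n) (ℓ : ℕ)
    (hℓ : ℓ = n * (n - 1) / 2) (j k : ℕ) (hj1 : 1 ≤ j) (hj2 : j ≤ n - 2)
    (hk1 : 1 ≤ k) (hk2 : k ≤ ℓ - 1) :
    Nat.card {l : List ℕ // IsReducedWordFor n (w₀ n) l ∧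
        l.getD (k - 1) 0 = j ∧ l.getD k 0 = j + 1} =
      Nat.card {l : List ℕ // IsReducedWordFor n (w₀ n) l ∧
        l.getD 0 0 = j ∧ l.getD 1 0 = j + 1} := by
  have hl3 : 3 ≤ n * (n - 1) / 2 := by
    have : 3 * (3 - 1) / 2 ≤ n * (n - 1) / 2 :=
      Nat.div_le_div_right (Nat.mul_le_mul hn (by omega))
    omega
  exact card_aux n j hj1 k hk1 (by omega)
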